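/- Let N, N_p ∈ ℕ, let ω_s > 0 for s = 1,…,N_p, let W_1,…,W_N : ℝ³ → ℝ be continuously differentiable, let M ∈ ℝ^{N×N} be symmetric and invertible, let c ∈ ℝ^N, and let B₀ : ℝ³ → ℝ³ be continuous. Define F : (ℝ³)^{N_p} → ℝ^N by F_i(X) = Σ_{s=1}^{N_p} ω_s W_i(X_s) − c_i, define Φ(X) = M⁻¹ F(X), and define the discrete Hamiltonian H(X,V) = (1/2) Σ_{s=1}^{N_p} ω_s |V_s|² + (1/2) Φ(X)ᵀ M Φ(X). If X_s, V_s : ℝ → ℝ³ are differentiable and satisfy the semi-discrete particle equations X_s'(t) = V_s(t) and V_s'(t) = −Σ_{j=1}^{N} Φ_j(X(t)) ∇W_j(X_s(t)) + V_s(t) × B₀(X_s(t)) for all s and t, then t ↦ H(X(t), V(t)) is constant. -/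

import Mathlib

open Matrix
open scoped Matrix BigOperators

noncomputable section

/-- Gradient of a function on ℝ³ (vector of partial derivatives). -/
def grad3 (f : (Fin 3 → ℝ) → ℝ) (x : Fin 3 → ℝ) : Fin 3 → ℝ :=
  fun i => fderiv ℝ f x (Pi.single i 1)

lemma clm_apply_eq_dot (L : (Fin 3 → ℝ) →L[ℝ] ℝ) (v : Fin 3 → ℝ) :
    L v = ∑ i, L (Pi.single i 1) * v i := by
  conv_lhs => rw [pi_eq_sum_univ v]
  rw [map_sum]
  refine Finset.sum_congr rfl fun i _ => ?_
  have h : (fun j => if i = j then (1:ℝ) else 0) = Pi.single i 1 := by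
    ext j; simp [Pi.single_apply, eq_comm]
  rw [_root_.map_smul, h, smul_eq_mul, mul_comm]

/-- The discrete Hamiltonian (energy) is conserved along solutions of the semi-discrete
particle equations of the Vlasov--Poisson system. -/
theorem discrete_energy_conserved {N Np : ℕ}
    (ω : Fin Np → ℝ) (hω : ∀ s, 0 < ω s)
    (W : Fin N → (Fin 3 → ℝ) → ℝ) (hW : ∀ j, ContDiff ℝ 1 (W j))
    (M : Matrix (Fin N) (Fin N) ℝ) (hMsymm : Mᵀ = M) (hMinv : IsUnit M.det)
    (c : Fin N → ℝ)
    (B0 : (Fin 3 → ℝ) → Fin 3 → ℝ) (hB : Continuous B0)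
    (F : (Fin Np → Fin 3 → ℝ) → Fin N → ℝ)
    (hF : F = fun X i => (∑ s, ω s * W i (X s)) - c i)
    (Φ : (Fin Np → Fin 3 → ℝ) → Fin N → ℝ)
    (hΦ : Φ = fun X => M⁻¹.mulVec (F X))
    (Ham : (Fin Np → Fin 3 → ℝ) → (Fin Np → Fin 3 → ℝ) → ℝ)
    (hHam : Ham = fun X V =>
      (1 / 2) * ∑ s, ω s * (V s ⬝ᵥ V s) + (1 / 2) * (Φ X ⬝ᵥ M.mulVec (Φ X)))
    (X V : ℝ → Fin Np → Fin 3 → ℝ)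
    (hX : ∀ (s : Fin Np) (t : ℝ), HasDerivAt (fun τ => X τ s) (V t s) t)
    (hV : ∀ (s : Fin Np) (t : ℝ), HasDerivAt (fun τ => V τ s)
      (-(∑ j, Φ (X t) j • grad3 (W j) (X t s)) + (V t s) ⨯₃ B0 (X t s)) t) :
    ∀ t₁ t₂ : ℝ, Ham (X t₁) (V t₁) = Ham (X t₂) (V t₂) := by
  have key : ∀ t : ℝ, HasDerivAt (fun τ => Ham (X τ) (V τ)) 0 t := by
    intro t
    -- notation
    set Φt : Fin N → ℝ := Φ (X t) with hΦt
    set gd : Fin N → Fin Np → Fin 3 → ℝ := fun j s => grad3 (W j) (X t s) with hgd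
    set Vd : Fin Np → Fin 3 → ℝ :=
      fun s => -(∑ j, Φt j • gd j s) + (V t s) ⨯₃ B0 (X t s) with hVd
    set Fd : Fin N → ℝ := fun j => ∑ s, ω s * (gd j s ⬝ᵥ V t s) with hFd
    set Φd : Fin N → ℝ := M⁻¹.mulVec Fd with hΦd
    -- derivative of W j (X τ s)
    have hWder : ∀ (j : Fin N) (s : Fin Np),
        HasDerivAt (fun τ => W j (X τ s)) (gd j s ⬝ᵥ V t s) t := by
      intro j s
      have hdiff : HasFDerivAt (W j) (fderiv ℝ (W j) (X t s)) (X t s) :=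
        (((hW j).differentiable one_ne_zero) (X t s)).hasFDerivAt
      have h := hdiff.comp_hasDerivAt t (hX s t)
      have heq : fderiv ℝ (W j) (X t s) (V t s) = gd j s ⬝ᵥ V t s := by
        rw [clm_apply_eq_dot]
        simp [hgd, grad3, dotProduct]
      rwa [heq] at h
    -- derivative of F (X τ) j
    have hFder : ∀ j : Fin N, HasDerivAt (fun τ => F (X τ) j) (Fd j) t := by
      intro j
      have : HasDerivAt (fun τ => (∑ s, ω s * W j (X τ s)) - c j) (Fd j) t := by
        refine HasDerivAt.sub_const _ ?_
        exact HasDerivAt.fun_sum fun s _ => (hWder j s).const_mul (ω s)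
      simpa [hF] using this
    -- derivative of Φ (X τ) i
    have hΦder : ∀ i : Fin N, HasDerivAt (fun τ => Φ (X τ) i) (Φd i) t := by
      intro i
      have : HasDerivAt (fun τ => ∑ j, M⁻¹ i j * F (X τ) j)
          (∑ j, M⁻¹ i j * Fd j) t :=
        HasDerivAt.fun_sum fun j _ => (hFder j).const_mul _
      simpa [hΦ, hΦd, Matrix.mulVec, dotProduct] using this
    -- componentwise derivative of V
    have hVcomp : ∀ (s : Fin Np) (i : Fin 3),
        HasDerivAt (fun τ => V τ s i) (Vd s i) t :=
      fun s i => (hasDerivAt_pi.1 (hV s t)) i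
    -- kinetic part
    have hK : ∀ s : Fin Np, HasDerivAt (fun τ => V τ s ⬝ᵥ V τ s)
        (2 * (V t s ⬝ᵥ Vd s)) t := by
      intro s
      have h : HasDerivAt (fun τ => ∑ i, V τ s i * V τ s i)
          (∑ i, (Vd s i * V t s i + V t s i * Vd s i)) t :=
        HasDerivAt.fun_sum fun i _ => (hVcomp s i).mul (hVcomp s i)
      have heq : (2 : ℝ) * (V t s ⬝ᵥ Vd s)
          = ∑ i, (Vd s i * V t s i + V t s i * Vd s i) := by
        rw [dotProduct, Finset.mul_sum]
        exact Finset.sum_congr rfl fun i _ => by ring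
      rw [heq]
      exact h.congr_of_eventuallyEq (by filter_upwards with τ; rw [dotProduct])
    -- field part
    have hP : HasDerivAt (fun τ => Φ (X τ) ⬝ᵥ M.mulVec (Φ (X τ)))
        (2 * (Φt ⬝ᵥ Fd)) t := by
      have h : HasDerivAt (fun τ => ∑ i, Φ (X τ) i * ∑ j, M i j * Φ (X τ) j)
          (∑ i, (Φd i * (∑ j, M i j * Φt j) + Φt i * ∑ j, M i j * Φd j)) t := by
        refine HasDerivAt.fun_sum fun i _ => (hΦder i).mul ?_
        exact HasDerivAt.fun_sum fun j _ => (hΦder j).const_mul _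
      have hMΦd : M.mulVec Φd = Fd := by
        rw [hΦd, Matrix.mulVec_mulVec, Matrix.mul_nonsing_inv M hMinv,
          Matrix.one_mulVec]
      have hsymm : Φd ⬝ᵥ M.mulVec Φt = Φt ⬝ᵥ M.mulVec Φd := by
        rw [Matrix.dotProduct_mulVec, ← hMsymm, Matrix.vecMul_transpose, hMsymm]
        exact dotProduct_comm _ _
      have heq : (2 : ℝ) * (Φt ⬝ᵥ Fd)
          = ∑ i, (Φd i * (∑ j, M i j * Φt j) + Φt i * ∑ j, M i j * Φd j) := by
        have h1 : (∑ i, (Φd i * (∑ j, M i j * Φt j) + Φt i * ∑ j, M i j * Φd j))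
            = Φd ⬝ᵥ M.mulVec Φt + Φt ⬝ᵥ M.mulVec Φd := by
          rw [Finset.sum_add_distrib]
          simp [dotProduct, Matrix.mulVec]
        rw [h1, hsymm, hMΦd]; ring
      rw [heq]
      refine h.congr_of_eventuallyEq ?_
      filter_upwards with τ
      simp [dotProduct, Matrix.mulVec]
    -- assemble
    have hH : HasDerivAt (fun τ => Ham (X τ) (V τ))
        ((1 / 2) * (∑ s, ω s * (2 * (V t s ⬝ᵥ Vd s))) + (1 / 2) * (2 * (Φt ⬝ᵥ Fd))) t := by
      rw [hHam]
      exact ((HasDerivAt.fun_sum fun s _ => (hK s).const_mul (ω s)).const_mul _).add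
        (hP.const_mul _)
    have hzero : (1 / 2 : ℝ) * (∑ s, ω s * (2 * (V t s ⬝ᵥ Vd s)))
        + (1 / 2) * (2 * (Φt ⬝ᵥ Fd)) = 0 := by
      have hVdot : ∀ s, V t s ⬝ᵥ Vd s = -∑ j, Φt j * (V t s ⬝ᵥ gd j s) := by
        intro s
        have h0 : V t s ⬝ᵥ Vd s = V t s ⬝ᵥ (-(∑ j, Φt j • gd j s))
            + V t s ⬝ᵥ ((V t s) ⨯₃ B0 (X t s)) := by
          simp only [hVd]
          exact dotProduct_add _ _ _
        rw [h0, dot_self_cross, add_zero, dotProduct_neg, neg_inj]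
        simp only [dotProduct, Finset.sum_apply, Pi.smul_apply, smul_eq_mul,
          Finset.mul_sum]
        rw [Finset.sum_comm]
        exact Finset.sum_congr rfl fun j _ => Finset.sum_congr rfl fun i _ => by ring
      have e1 : (1 / 2 : ℝ) * (∑ s, ω s * (2 * (V t s ⬝ᵥ Vd s)))
          = ∑ s, ω s * (V t s ⬝ᵥ Vd s) := by
        rw [Finset.mul_sum]
        exact Finset.sum_congr rfl fun s _ => by ring
      have e2 : (1 / 2 : ℝ) * (2 * (Φt ⬝ᵥ Fd)) = Φt ⬝ᵥ Fd := by ring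
      have e4 : Φt ⬝ᵥ Fd = ∑ s, ∑ j, Φt j * (ω s * (gd j s ⬝ᵥ V t s)) := by
        simp only [dotProduct, hFd, Finset.mul_sum]
        exact Finset.sum_comm
      rw [e1, e2, e4]
      simp only [hVdot]
      rw [← Finset.sum_add_distrib]
      refine Finset.sum_eq_zero fun s _ => ?_
      rw [mul_neg, neg_add_eq_zero, Finset.mul_sum]
      exact Finset.sum_congr rfl fun j _ => by rw [dotProduct_comm]; ring
    rw [hzero] at hH
    exact hH
  intro t₁ t₂
  exact is_const_of_deriv_eq_zero (fun t => (key t).differentiableAt)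
    (fun t => (key t).deriv) t₁ t₂
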